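/- For any two Lyndon words s and r over {0,1} of length at least 2, the lexicographically largest cyclic rotation of s • r equals s • L(r), i.e., L(s • r) = s • L(r). -/

import Mathlib

/-- The cyclic rotation of a binary word `c` by `i`: `c_{i+1}…c_m c_1…c_i`. -/
def rot (c : List Bool) (i : ℕ) : List Bool := c.drop i ++ c.take i

/-- The lexicographically largest cyclic rotation `L(s)` of `s`. -/
def maxRot (s : List Bool) : List Bool :=
  (List.range s.length).foldl (fun acc i => max acc (rot s i)) s

/-- The lexicographically smallest cyclic rotation `S(s)` of `s`. -/
def minRot (s : List Bool) : List Bool :=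
  (List.range s.length).foldl (fun acc i => min acc (rot s i)) s

/-- A binary word is Lyndon if every proper suffix is strictly lexicographically
greater than the prefix of the same length. -/
def IsLyndon (s : List Bool) : Prop :=
  ∀ i, 0 < i → i < s.length → s.take (s.length - i) < s.drop i

/-- The block emitted by the substitution `Φ_s` (with `a = L(s)`) for a pair of
consecutive digits: `00 ↦ a`, `01 ↦ a⁺`, `10 ↦ s⁻`, `11 ↦ s`. -/
def blk (s a : List Bool) : Bool → Bool → List Bool
  | false, false => a
  | false, true  => a.dropLast ++ [true]
  | true,  false => s.dropLast ++ [false]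
  | true,  true  => s

/-- The substitution `Φ_s` on infinite sequences: the first block is `s⁻` if `r 0 = 0`
and `L(s)⁺` if `r 0 = 1`; block `j+1` is determined by the pair `(r j, r (j+1))`. -/
def subst (s : List Bool) (r : ℕ → Bool) : ℕ → Bool := fun n =>
  let m := s.length
  let j := n / m
  (if j = 0 then blk s (maxRot s) (!(r 0)) (r 0)
   else blk s (maxRot s) (r (j - 1)) (r j)).getD (n % m) false

/-- The substitution `s • r` on finite words. -/
def substWord (s : List Bool) (r : List Bool) : List Bool :=
  match r with
  | [] => []
  | c :: _ =>
      blk s (maxRot s) (!c) c ++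
        ((r.zip r.tail).map fun p => blk s (maxRot s) p.1 p.2).flatten

namespace Stmt8Aux

/-! ### Lexicographic order toolkit -/

lemma bool_flt : (false : Bool) < true := by decide

lemma lex_rel {x y : List Bool} : (false :: x) < (true :: y) := List.Lex.rel bool_flt

lemma lex_append_left (u : List Bool) {x y : List Bool} (h : x < y) : u ++ x < u ++ y := by
  induction u with
  | nil => exact h
  | cons c u ih => exact List.Lex.cons ih

lemma lex_singleton {b c : Bool} (h : ([b] : List Bool) < [c]) : b = false ∧ c = true := by
  cases h with
  | rel h => exact Bool.lt_iff.1 h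
  | cons h => cases h

lemma lex_ext {x y : List Bool} (u v : List Bool) (hl : x.length = y.length) (h : x < y) :
    x ++ u < y ++ v := by
  induction x generalizing y with
  | nil =>
    cases y with
    | nil => cases h
    | cons d y => simp at hl
  | cons c x ih =>
    cases y with
    | nil => simp at hl
    | cons d y =>
      cases h with
      | rel h => exact List.Lex.rel h
      | cons h => exact List.Lex.cons (ih (by simpa using hl) h)

lemma lex_split {x y u v : List Bool} (hl : x.length = y.length) (h : x ++ u < y ++ v) :
    x < y ∨ (x = y ∧ u < v) := by
  induction x generalizing y with
  | nil =>
    cases y with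
    | nil => exact Or.inr ⟨rfl, h⟩
    | cons d y => simp at hl
  | cons c x ih =>
    cases y with
    | nil => simp at hl
    | cons d y =>
      cases h with
      | rel h => exact Or.inl (List.Lex.rel h)
      | cons h =>
        rcases ih (by simpa using hl) h with h' | ⟨he, hu⟩
        · exact Or.inl (List.Lex.cons h')
        · exact Or.inr ⟨by rw [he], hu⟩

lemma lex_take {x y : List Bool} (n : ℕ) (hx : n ≤ x.length) (hy : n ≤ y.length)
    (h : x.take n < y.take n) : x < y := by
  have h2 := lex_ext (x.drop n) (y.drop n)
    (by rw [List.length_take, List.length_take, Nat.min_eq_left hx, Nat.min_eq_left hy]) h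
  rwa [List.take_append_drop, List.take_append_drop] at h2

lemma take_le_take {x y : List Bool} (hl : x.length = y.length) (n : ℕ) (h : x ≤ y) :
    x.take n ≤ y.take n := by
  by_cases hn : n ≤ x.length
  · by_contra hlt
    push_neg at hlt
    exact absurd (lex_take n (hl ▸ hn) hn hlt) (not_lt.2 h)
  · push_neg at hn
    rw [List.take_of_length_le hn.le, List.take_of_length_le (by omega)]
    exact h

/-! ### foldl max toolkit -/

section fold
variable {g : ℕ → List Bool} {X : List Bool}

lemma le_foldl_max (l : List ℕ) (acc : List Bool) :
    acc ≤ l.foldl (fun a i => max a (g i)) acc := by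
  induction l generalizing acc with
  | nil => exact le_rfl
  | cons c l ih => exact le_trans (le_max_left _ _) (ih _)

lemma foldl_max_ge {i : ℕ} (l : List ℕ) (acc : List Bool) (h : i ∈ l) :
    g i ≤ l.foldl (fun a i => max a (g i)) acc := by
  induction l generalizing acc with
  | nil => cases h
  | cons c l ih =>
    rcases List.mem_cons.1 h with rfl | h
    · exact le_trans (le_max_right _ _) (le_foldl_max _ _)
    · exact ih _ h

lemma foldl_max_le (l : List ℕ) (acc : List Bool) (ha : acc ≤ X)
    (h : ∀ i ∈ l, g i ≤ X) : l.foldl (fun a i => max a (g i)) acc ≤ X := by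
  induction l generalizing acc with
  | nil => exact ha
  | cons c l ih =>
    exact ih _ (max_le ha (h c (by simp))) (fun i hi => h i (by simp [hi]))

lemma foldl_max_mem (l : List ℕ) (acc : List Bool) :
    l.foldl (fun a i => max a (g i)) acc = acc ∨
      ∃ i ∈ l, l.foldl (fun a i => max a (g i)) acc = g i := by
  induction l generalizing acc with
  | nil => exact Or.inl rfl
  | cons c l ih =>
    rcases ih (max acc (g c)) with h | ⟨i, hi, h⟩
    · rcases max_choice acc (g c) with hm | hm
      · exact Or.inl (h.trans hm)
      · exact Or.inr ⟨c, by simp, h.trans hm⟩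
    · exact Or.inr ⟨i, by simp [hi], h⟩

end fold

/-! ### maxRot basics -/

lemma rot_eq_rotate {c : List Bool} {i : ℕ} (h : i ≤ c.length) : rot c i = c.rotate i :=
  (List.rotate_eq_drop_append_take h).symm

lemma rotate_le_maxRot (c : List Bool) (j : ℕ) : c.rotate j ≤ maxRot c := by
  rcases eq_or_ne c [] with rfl | hc
  · simp [maxRot]
  · have hn : 0 < c.length := List.length_pos_iff.2 hc
    rw [← List.rotate_mod]
    have hj : j % c.length < c.length := Nat.mod_lt _ hn
    rw [← rot_eq_rotate hj.le]
    exact foldl_max_ge (g := rot c) _ _ (List.mem_range.2 hj)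

lemma exists_maxRot_rotate (c : List Bool) (hc : c ≠ []) :
    ∃ k < c.length, maxRot c = c.rotate k := by
  rcases foldl_max_mem (g := rot c) (List.range c.length) c with h | ⟨i, hi, h⟩
  · exact ⟨0, List.length_pos_iff.2 hc, by simpa [maxRot] using h⟩
  · have hi' := List.mem_range.1 hi
    exact ⟨i, hi', by unfold maxRot; rw [h, rot_eq_rotate hi'.le]⟩

lemma maxRot_eq_of (c X : List Bool) (h1 : ∃ i, X = c.rotate i)
    (h2 : ∀ j, c.rotate j ≤ X) : maxRot c = X := by
  rcases eq_or_ne c [] with rfl | hc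
  · obtain ⟨i, rfl⟩ := h1
    simp [maxRot]
  apply le_antisymm
  · apply foldl_max_le (g := rot c)
    · simpa using h2 0
    · intro i hi
      rw [rot_eq_rotate (List.mem_range.1 hi).le]; exact h2 i
  · obtain ⟨i, rfl⟩ := h1
    exact rotate_le_maxRot c i

end Stmt8Aux

/-! ### Lyndon word facts -/
namespace Stmt8Aux

lemma lyndon_lt_rotate {w : List Bool} (hw : IsLyndon w) {i : ℕ} (h0 : 0 < i)
    (hi : i < w.length) : w < w.rotate i := by
  have h := hw i h0 hi
  have h2 := lex_ext (w.drop (w.length - i)) (w.take i)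
    (by rw [List.length_take, List.length_drop]; omega) h
  rw [List.take_append_drop] at h2
  rwa [List.rotate_eq_drop_append_take hi.le]

lemma lyndon_le_rotate {w : List Bool} (hw : IsLyndon w) (j : ℕ) : w ≤ w.rotate j := by
  rcases eq_or_ne w [] with rfl | hne
  · simp
  rw [← List.rotate_mod]
  rcases Nat.eq_zero_or_pos (j % w.length) with h | h
  · rw [h, List.rotate_zero]
  · exact (lyndon_lt_rotate hw h (Nat.mod_lt _ (List.length_pos_iff.2 hne))).le

lemma lyndon_rotate_injOn {w : List Bool} (hw : IsLyndon w) {p q : ℕ} (hp : p < w.length)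
    (hq : q < w.length) (h : w.rotate p = w.rotate q) : p = q := by
  by_contra hne
  wlog hlt : p < q generalizing p q
  · exact this hq hp h.symm (Ne.symm hne) (by omega)
  have h2 : w.rotate (p + (w.length - q)) = w.rotate (q + (w.length - q)) := by
    rw [← List.rotate_rotate, ← List.rotate_rotate, h]
  rw [show q + (w.length - q) = w.length by omega, List.rotate_length] at h2
  exact (lyndon_lt_rotate hw (show 0 < p + (w.length - q) by omega)
    (show p + (w.length - q) < w.length by omega)).ne' h2

lemma maxRot_rotate_lt {w : List Bool} (hw : IsLyndon w) (h2 : 2 ≤ w.length) {i : ℕ}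
    (h0 : 0 < i) (hi : i < w.length) : (maxRot w).rotate i < maxRot w := by
  have hne : w ≠ [] := by intro h; rw [h] at h2; simp at h2
  obtain ⟨d, hd, hA⟩ := exists_maxRot_rotate w hne
  have heq : (maxRot w).rotate i = w.rotate ((d + i) % w.length) := by
    rw [hA, List.rotate_rotate, List.rotate_mod]
  have hle : (maxRot w).rotate i ≤ maxRot w := by
    rw [heq]; exact rotate_le_maxRot w _
  rcases lt_or_eq_of_le hle with h | h
  · exact h
  exfalso
  rw [heq, hA] at h
  have hinj := lyndon_rotate_injOn hw (Nat.mod_lt _ (show 0 < w.length by omega)) hd h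
  rcases lt_or_ge (d + i) w.length with hlt | hge
  · rw [Nat.mod_eq_of_lt hlt] at hinj; omega
  · rw [Nat.mod_eq_sub_mod hge, Nat.mod_eq_of_lt (by omega)] at hinj; omega

lemma coLyndon_of_strict {A : List Bool} (key : ∀ j, 0 < j → j < A.length → A.rotate j < A)
    {i : ℕ} (h0 : 0 < i) (hi : i < A.length) :
    A.drop i < A.take (A.length - i) := by
  have main : ∀ j, 0 < j → j < A.length →
      A.drop j < A.take (A.length - j) ∨
      (A.drop j = A.take (A.length - j) ∧ A.take j < A.drop (A.length - j)) := by
    intro j hj0 hj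
    have h := key j hj0 hj
    rw [List.rotate_eq_drop_append_take hj.le] at h
    have h' : A.drop j ++ A.take j < A.take (A.length - j) ++ A.drop (A.length - j) := by
      rwa [List.take_append_drop]
    exact lex_split (by rw [List.length_drop, List.length_take]; omega) h'
  rcases main i h0 hi with h | ⟨he, ht⟩
  · exact h
  exfalso
  have h0' : 0 < A.length - i := by omega
  have hi' : A.length - i < A.length := by omega
  rcases main _ h0' hi' with h | ⟨he2, ht2⟩
  · rw [show A.length - (A.length - i) = i by omega] at h
    exact lt_asymm ht h
  · rw [show A.length - (A.length - i) = i by omega] at he2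
    rw [he2] at ht
    exact lt_irrefl _ ht

/-- Bundle of facts about a Lyndon word `w` (of length at least 2) and its
largest rotation `maxRot w`. -/
structure SF (w : List Bool) : Prop where
  h2 : 2 ≤ w.length
  hd : ∃ d, maxRot w = w.rotate d
  hlen : (maxRot w).length = w.length
  hmax : ∀ j, w.rotate j ≤ maxRot w
  hmin : ∀ j, w ≤ w.rotate j
  sstruct : w = w.dropLast ++ [true]
  shead : ∃ tl, w = false :: tl
  astruct : maxRot w = (maxRot w).dropLast ++ [false]
  ahead : ∃ tl, maxRot w = true :: tl
  acoL : ∀ i, 0 < i → i < w.length → (maxRot w).drop i < (maxRot w).take (w.length - i)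

lemma singleton_of_length_one {l : List Bool} (h : l.length = 1) : ∃ b, l = [b] :=
  List.length_eq_one_iff.1 h

lemma mkSF {w : List Bool} (hw : IsLyndon w) (h2 : 2 ≤ w.length) : SF w := by
  have hne : w ≠ [] := by intro h; rw [h] at h2; simp at h2
  obtain ⟨d, hdlt, hA⟩ := exists_maxRot_rotate w hne
  have hlen : (maxRot w).length = w.length := by rw [hA, List.length_rotate]
  have hstrict : ∀ j, 0 < j → j < (maxRot w).length → (maxRot w).rotate j < maxRot w := by
    intro j hj0 hj
    exact maxRot_rotate_lt hw h2 hj0 (hlen ▸ hj)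
  have acoL : ∀ i, 0 < i → i < w.length →
      (maxRot w).drop i < (maxRot w).take (w.length - i) := by
    intro i h0 hi
    have := coLyndon_of_strict hstrict h0 (hlen ▸ hi)
    rwa [hlen] at this
  -- endpoints of w
  have hw1 := hw (w.length - 1) (by omega) (by omega)
  rw [show w.length - (w.length - 1) = 1 by omega] at hw1
  obtain ⟨b, hb⟩ := singleton_of_length_one
    (show (w.take 1).length = 1 by rw [List.length_take]; omega)
  obtain ⟨c, hc⟩ := singleton_of_length_one
    (show (w.drop (w.length - 1)).length = 1 by rw [List.length_drop]; omega)
  rw [hb, hc] at hw1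
  obtain ⟨hbf, hct⟩ := lex_singleton hw1
  have sstruct : w = w.dropLast ++ [true] := by
    conv_lhs => rw [← List.take_append_drop (w.length - 1) w]
    rw [List.dropLast_eq_take, hc, hct]
  have shead : ∃ tl, w = false :: tl := by
    refine ⟨w.drop 1, ?_⟩
    conv_lhs => rw [← List.take_append_drop 1 w]
    rw [hb, hbf]; rfl
  -- endpoints of maxRot w
  have ha1 := acoL (w.length - 1) (by omega) (by omega)
  rw [show w.length - (w.length - 1) = 1 by omega] at ha1
  obtain ⟨b', hb'⟩ := singleton_of_length_one
    (show ((maxRot w).drop (w.length - 1)).length = 1 by rw [List.length_drop, hlen]; omega)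
  obtain ⟨c', hc'⟩ := singleton_of_length_one
    (show ((maxRot w).take 1).length = 1 by rw [List.length_take, hlen]; omega)
  rw [hb', hc'] at ha1
  obtain ⟨hbf', hct'⟩ := lex_singleton ha1
  have astruct : maxRot w = (maxRot w).dropLast ++ [false] := by
    conv_lhs => rw [← List.take_append_drop (w.length - 1) (maxRot w)]
    rw [List.dropLast_eq_take, hlen, hb', hbf']
  have ahead : ∃ tl, maxRot w = true :: tl := by
    refine ⟨(maxRot w).drop 1, ?_⟩
    conv_lhs => rw [← List.take_append_drop 1 (maxRot w)]
    rw [hc', hct']; rfl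
  exact ⟨h2, ⟨d, hA⟩, hlen, rotate_le_maxRot w, lyndon_le_rotate hw,
    sstruct, shead, astruct, ahead, acoL⟩

end Stmt8Aux

/-! ### Substitution structure -/
namespace Stmt8Aux

/-- The common prefix of a block determined by the previous digit. -/
def Pb (s : List Bool) : Bool → List Bool
  | true => s.dropLast
  | false => (maxRot s).dropLast

/-- An elementary block of the cyclic coding. -/
def tau (s : List Bool) (c : Bool) : List Bool := c :: Pb s c

/-- The cyclic coding word. -/
def Tw (s w : List Bool) : List Bool := (w.map (tau s)).flatten

lemma Tw_nil (s : List Bool) : Tw s [] = [] := rfl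

lemma Tw_cons (s : List Bool) (c : Bool) (w : List Bool) :
    Tw s (c :: w) = tau s c ++ Tw s w := by simp [Tw]

lemma Tw_append (s w₁ w₂ : List Bool) : Tw s (w₁ ++ w₂) = Tw s w₁ ++ Tw s w₂ := by
  simp [Tw]

section withSF
variable {s : List Bool} (F : SF s)
include F

lemma length_Pb (c : Bool) : (Pb s c).length = s.length - 1 := by
  cases c <;> simp [Pb, List.length_dropLast, F.hlen]

lemma length_tau (c : Bool) : (tau s c).length = s.length := by
  have := F.h2
  simp [tau, length_Pb F]; omega

lemma length_Tw (w : List Bool) : (Tw s w).length = w.length * s.length := by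
  induction w with
  | nil => simp [Tw]
  | cons c w ih =>
    rw [Tw_cons, List.length_append, length_tau F, ih, List.length_cons]
    ring

lemma blk_eq (p c : Bool) : blk s (maxRot s) p c = Pb s p ++ [c] := by
  cases p <;> cases c
  · exact F.astruct
  · rfl
  · rfl
  · exact F.sstruct

/-- body of the zipped coding -/
def body (s : List Bool) : Bool → List Bool → List Bool
  | _, [] => []
  | c, d :: w => Pb s c ++ [d] ++ body s d w

lemma zipmap (c : Bool) (w : List Bool) :
    (((c :: w).zip w).map (fun p => blk s (maxRot s) p.1 p.2)).flatten = body s c w := by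
  induction w generalizing c with
  | nil => rfl
  | cons d w ih =>
    rw [List.zip_cons_cons, List.map_cons, List.flatten_cons, ih d, blk_eq F]
    rfl

omit F in
lemma headbody (c : Bool) (w : List Bool) :
    [c] ++ body s c w = Tw s ((c :: w).dropLast) ++ [(c :: w).getLast (by simp)] := by
  induction w generalizing c with
  | nil => simp [body, Tw]
  | cons d w ih =>
    have : [c] ++ body s c (d :: w) = tau s c ++ ([d] ++ body s d w) := by
      simp [body, tau, Pb]
    rw [this, ih d, List.dropLast_cons₂, Tw_cons, List.getLast_cons_cons]
    simp

lemma substWord_eq (c : Bool) (w : List Bool) :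
    substWord s (c :: w) =
      Pb s (!c) ++ (Tw s ((c :: w).dropLast) ++ [(c :: w).getLast (by simp)]) := by
  show blk s (maxRot s) (!c) c ++ _ = _
  rw [blk_eq F]
  have : ((c :: w).zip (c :: w).tail) = ((c :: w).zip w) := rfl
  rw [this, zipmap F, List.append_assoc, headbody]

lemma subst_rotate {w : List Bool} (hne : w ≠ [])
    (hlast : w.getLast hne = !(w.head hne)) :
    substWord s w = (Tw s w).rotate ((w.length - 1) * s.length + 1) := by
  obtain ⟨c, w', rfl⟩ := List.exists_cons_of_ne_nil hne
  rw [substWord_eq F]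
  have hhead : (c :: w').head (by simp) = c := rfl
  rw [hhead] at hlast
  have hw : (c :: w') = (c :: w').dropLast ++ [(c :: w').getLast (by simp)] :=
    (List.dropLast_append_getLast _).symm
  have hTw : Tw s (c :: w') =
      (Tw s ((c :: w').dropLast) ++ [(c :: w').getLast (by simp)]) ++
        Pb s ((c :: w').getLast (by simp)) := by
    conv_lhs => rw [hw]
    rw [Tw_append]
    simp [Tw, tau, List.append_assoc]
  have hlen1 : (Tw s ((c :: w').dropLast) ++ [(c :: w').getLast (by simp)]).length =
      ((c :: w').length - 1) * s.length + 1 := by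
    rw [List.length_append, length_Tw F, List.length_dropLast]
    simp
  have hle : ((c :: w').length - 1) * s.length + 1 ≤ (Tw s (c :: w')).length := by
    rw [hTw, List.length_append, hlen1]
    omega
  rw [List.rotate_eq_drop_append_take hle]
  conv_lhs => rw [hlast]
  conv_rhs => rw [hTw]
  rw [List.drop_left' hlen1, List.take_left' hlen1, hlast]

lemma subst_rotate' (c : Bool) (w' : List Bool)
    (hlast : (c :: w').getLast (by simp) = !c) :
    substWord s (c :: w') = (Tw s (c :: w')).rotate (((c :: w').length - 1) * s.length + 1) :=
  subst_rotate F (by simp) hlast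

lemma Tw_rotate_one (v : List Bool) : (Tw s v).rotate s.length = Tw s (v.rotate 1) := by
  cases v with
  | nil => simp [Tw]
  | cons c v' =>
    rw [Tw_cons]
    have h1 : (tau s c).length = s.length := length_tau F c
    have hle : s.length ≤ (tau s c ++ Tw s v').length := by
      rw [List.length_append, h1]; omega
    rw [List.rotate_eq_drop_append_take hle, List.drop_left' h1, List.take_left' h1]
    rw [List.rotate_cons_succ, List.rotate_zero, Tw_append]
    simp [Tw, tau]

lemma Tw_rotate_mul (w : List Bool) (q : ℕ) :
    (Tw s w).rotate (q * s.length) = Tw s (w.rotate q) := by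
  induction q with
  | zero => simp
  | succ q ih =>
    have : (q + 1) * s.length = q * s.length + s.length := by ring
    rw [this, ← List.rotate_rotate, ih, Tw_rotate_one F, List.rotate_rotate]

end withSF
end Stmt8Aux

namespace Stmt8Aux

lemma getLast_cat {l w : List Bool} {b : Bool} (h : w ≠ []) (he : w = l ++ [b]) :
    w.getLast h = b := by subst he; exact List.getLast_concat

lemma Tw_mono {s : List Bool} : ∀ {Y Z : List Bool} (E₁ E₂ : List Bool),
    Y.length = Z.length → Y < Z → Tw s Y ++ E₁ < Tw s Z ++ E₂ := by
  intro Y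
  induction Y with
  | nil =>
    intro Z E₁ E₂ hl h
    cases Z with
    | nil => cases h
    | cons d Z => simp at hl
  | cons c Y ih =>
    intro Z E₁ E₂ hl h
    cases Z with
    | nil => simp at hl
    | cons d Z =>
      cases h with
      | rel hcd =>
        obtain ⟨rfl, rfl⟩ := Bool.lt_iff.1 hcd
        simp only [Tw_cons, tau, List.cons_append, List.append_assoc]
        exact lex_rel
      | cons htl =>
        simp only [Tw_cons, tau, List.cons_append, List.append_assoc]
        exact List.Lex.cons (lex_append_left _ (ih E₁ E₂ (by simpa using hl) htl))

theorem main (s r : List Bool) (hs : 2 ≤ s.length) (hr : 2 ≤ r.length)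
    (hLs : IsLyndon s) (hLr : IsLyndon r) :
    maxRot (substWord s r) = substWord s (maxRot r) := by
  have F : SF s := mkSF hLs hs
  have G : SF r := mkSF hLr hr
  have hm2 : 2 ≤ s.length := hs
  have hl2 : 2 ≤ r.length := hr
  have haa : maxRot s = Pb s false ++ [false] := F.astruct
  have hss : s = Pb s true ++ [true] := F.sstruct
  have hA'len : (Pb s false).length = s.length - 1 := length_Pb F false
  have hS'len : (Pb s true).length = s.length - 1 := length_Pb F true
  have halen : (maxRot s).length = s.length := F.hlen
  have hzlen : (maxRot r).length = r.length := G.hlen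
  obtain ⟨d, hd⟩ := F.hd
  have frot : ∀ j, (maxRot s).rotate j = s.rotate (d + j) := by
    intro j; rw [hd, List.rotate_rotate]
  have f7 : ∀ j, (maxRot s).rotate j ≤ maxRot s := by
    intro j; rw [frot]; exact F.hmax _
  have f8 : ∀ j, s ≤ (maxRot s).rotate j := by
    intro j; rw [frot]; exact F.hmin _
  have f1 : ∀ t ≤ s.length - 1, s.drop t = (Pb s true).drop t ++ [true] := by
    intro t ht
    conv_lhs => rw [hss]
    rw [List.drop_append, show t - (Pb s true).length = 0 by omega,
      List.drop_zero]
  have f2 : ∀ t ≤ s.length - 1, (maxRot s).drop t = (Pb s false).drop t ++ [false] := by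
    intro t ht
    conv_lhs => rw [haa]
    rw [List.drop_append, show t - (Pb s false).length = 0 by omega,
      List.drop_zero]
  have f3 : ∀ t ≤ s.length - 1, s.take t = (Pb s true).take t := by
    intro t ht
    conv_lhs => rw [hss]
    rw [List.take_append, show t - (Pb s true).length = 0 by omega,
      List.take_zero, List.append_nil]
  have f4 : ∀ t ≤ s.length - 1, (maxRot s).take t = (Pb s false).take t := by
    intro t ht
    conv_lhs => rw [haa]
    rw [List.take_append, show t - (Pb s false).length = 0 by omega,
      List.take_zero, List.append_nil]
  have ha_lt_ap : maxRot s < Pb s false ++ [true] := by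
    conv_lhs => rw [haa]
    exact lex_append_left _ (List.Lex.rel bool_flt)
  have hap_len : (Pb s false ++ [true]).length = s.length := by
    rw [List.length_append, hA'len]; simp; omega
  -- structure of M := substWord s (maxRot r)
  obtain ⟨ztl, hztl⟩ := G.ahead
  have hztl_ne : ztl ≠ [] := by
    intro h
    rw [h] at hztl
    have h2 := hzlen
    rw [hztl] at h2
    simp at h2
    omega
  obtain ⟨z2h, z2t, hz2⟩ := List.exists_cons_of_ne_nil hztl_ne
  have hzne : maxRot r ≠ [] := by rw [hztl]; simp
  have hzgl : (true :: ztl).getLast (by simp) = !true := by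
    have h := getLast_cat (w := true :: ztl) (by simp) (hztl ▸ G.astruct)
    rw [h]
    rfl
  have hMrot : substWord s (maxRot r) =
      (Tw s (maxRot r)).rotate ((r.length - 1) * s.length + 1) := by
    conv_lhs => rw [hztl]
    rw [subst_rotate' F true ztl hzgl, ← hztl, hzlen]
  have hMlen : (substWord s (maxRot r)).length = r.length * s.length := by
    rw [hMrot, List.length_rotate, length_Tw F, hzlen]
  have hM : substWord s (maxRot r) =
      Pb s false ++ (true :: (Pb s true ++ (Tw s ((z2h :: z2t).dropLast) ++ [false]))) := by
    conv_lhs => rw [hztl]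
    rw [substWord_eq F true ztl, hzgl]
    rw [show (true :: ztl).dropLast = true :: (z2h :: z2t).dropLast by
      rw [hz2, List.dropLast_cons₂], Tw_cons]
    simp [tau, Pb, List.append_assoc]
  have hMtakem : (substWord s (maxRot r)).take s.length = Pb s false ++ [true] := by
    rw [hM, List.take_append,
      List.take_of_length_le (by omega),
      show s.length - (Pb s false).length = 1 by omega]
    rfl
  -- the key bound: every rotation of `Tw s v` for `v` a rotation of `r` is at most `M`
  have key : ∀ v, (∃ q, v = r.rotate q) → ∀ u, u < s.length →
      (Tw s v).rotate u ≤ substWord s (maxRot r) := by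
    intro v hv u hu
    obtain ⟨q, hvq⟩ := hv
    have hvlen : v.length = r.length := by rw [hvq, List.length_rotate]
    have hv1le : v.rotate 1 ≤ maxRot r := by
      rw [hvq, List.rotate_rotate]; exact G.hmax _
    obtain ⟨c₀, v1, hv0⟩ := List.exists_cons_of_ne_nil
      (show v ≠ [] by intro h; rw [h] at hvlen; simp at hvlen; omega)
    obtain ⟨c₁, v2, hv1⟩ := List.exists_cons_of_ne_nil
      (show v1 ≠ [] by
        intro h
        rw [hv0, h] at hvlen
        simp at hvlen
        omega)
    have hvform : v = c₀ :: c₁ :: v2 := by rw [hv0, hv1]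
    have hv2len : v2.length = r.length - 2 := by
      have := hvlen; rw [hvform] at this; simp at this; omega
    have hTwv : Tw s v = tau s c₀ ++ (tau s c₁ ++ Tw s v2) := by
      rw [hvform, Tw_cons, Tw_cons]
    have hTwlen : (Tw s v).length = r.length * s.length := by
      rw [length_Tw F, hvlen]
    have hNge : 2 * s.length ≤ r.length * s.length := Nat.mul_le_mul_right _ hl2
    have hMlen' := hMlen
    cases u with
    | zero =>
      rw [List.rotate_zero]
      cases c₀ with
      | false =>
        obtain ⟨a2, ha2⟩ : ∃ tl2, Pb s false = true :: tl2 := by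
          obtain ⟨atl, hatl⟩ := F.ahead
          have hatl_ne : atl ≠ [] := by
            intro h
            rw [h] at hatl
            have h2 := halen
            rw [hatl] at h2
            simp at h2
            omega
          obtain ⟨x1, xs1, hxs1⟩ := List.exists_cons_of_ne_nil hatl_ne
          refine ⟨(x1 :: xs1).dropLast, ?_⟩
          show (maxRot s).dropLast = _
          rw [hatl, hxs1, List.dropLast_cons₂]
        rw [hM, hTwv, ha2]
        show (false :: Pb s false) ++ _ ≤ (true :: a2) ++ _
        rw [List.cons_append, List.cons_append]
        exact lex_rel.le
      | true =>
        have g1 : s.drop (s.length - 1) = [true] := by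
          rw [f1 _ (le_refl _), List.drop_eq_nil_of_le (by omega), List.nil_append]
        have g2 : s.take (s.length - 1) = Pb s true := by
          rw [f3 _ (le_refl _), List.take_of_length_le (by omega)]
        have h1 : (Tw s v).take s.length = s.rotate (s.length - 1) := by
          rw [hTwv, List.take_left' (length_tau F true),
            List.rotate_eq_drop_append_take (by omega), g1, g2]
          rfl
        have h3 : (Tw s v).take s.length < (substWord s (maxRot r)).take s.length := by
          rw [h1, hMtakem]
          exact lt_of_le_of_lt (F.hmax _) ha_lt_ap
        exact (lex_take s.length (by omega) (by omega) h3).le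
    | succ t =>
      have ht : t < s.length - 1 := by omega
      have hρ : (Tw s v).rotate (t + 1) =
          (Pb s c₀).drop t ++ (c₁ :: (Pb s c₁ ++ (Tw s v2 ++ (c₀ :: (Pb s c₀).take t)))) := by
        rw [List.rotate_eq_drop_append_take (show t + 1 ≤ (Tw s v).length by omega), hTwv,
          List.drop_append, List.take_append,
          show t + 1 - (tau s c₀).length = 0 by rw [length_tau F]; omega,
          List.drop_zero, List.take_zero, List.append_nil]
        show (c₀ :: Pb s c₀).drop (t + 1) ++ _ ++ (c₀ :: Pb s c₀).take (t + 1) = _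
        rw [List.drop_succ_cons, List.take_succ_cons, tau]
        simp [List.append_assoc]
      have hρlen : ((Tw s v).rotate (t + 1)).length = r.length * s.length := by
        rw [List.length_rotate, hTwlen]
      have hPc₀d : ((Pb s c₀).drop t).length = s.length - 1 - t := by
        rw [List.length_drop, length_Pb F]
      -- generic take computations
      have htake : ∀ (c₀' c₁' : Bool) (R : List Bool) (n : ℕ),
          ((Pb s c₀').drop t ++ (c₁' :: R)).take (s.length - 1 - t + (n + 1)) =
            (Pb s c₀').drop t ++ (c₁' :: R.take n) := by
        intro c₀' c₁' R n
        rw [List.take_append,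
          List.take_of_length_le (by rw [List.length_drop, length_Pb F]; omega),
          show s.length - 1 - t + (n + 1) - ((Pb s c₀').drop t).length = n + 1 by
            rw [List.length_drop, length_Pb F]; omega,
          List.take_succ_cons]
      have hMtake_mt : ∀ n, n ≤ s.length →
          (substWord s (maxRot r)).take n = (Pb s false ++ [true]).take n := by
        intro n hn
        rw [← hMtakem, List.take_take]
        congr 1
        omega
      have hzdl : (maxRot r).dropLast = true :: (z2h :: z2t).dropLast := by
        rw [hztl, hz2, List.dropLast_cons₂]
      cases c₀ with
      | true =>
        cases c₁ with
        | true =>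
          have h1 : ((Tw s v).rotate (t + 1)).take s.length = s.rotate t := by
            rw [hρ, show s.length = s.length - 1 - t + (t + 1) by omega,
              htake true true _ t,
              List.take_append, show t - (Pb s true).length = 0 by omega,
              List.take_zero, List.append_nil,
              List.rotate_eq_drop_append_take (show t ≤ s.length by omega),
              f1 t (by omega), f3 t (by omega)]
            simp [List.append_assoc]
          have h2 : ((Tw s v).rotate (t + 1)).take s.length <
              (substWord s (maxRot r)).take s.length := by
            rw [h1, hMtakem]
            exact lt_of_le_of_lt (F.hmax t) ha_lt_ap
          exact (lex_take s.length (by omega) (by omega) h2).le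
        | false =>
          have h1 : ((Tw s v).rotate (t + 1)).take (s.length - t) =
              (Pb s true).drop t ++ [false] := by
            rw [hρ, show s.length - t = s.length - 1 - t + (0 + 1) by omega,
              htake true false _ 0, List.take_zero]
          have h2 : (s.rotate t).take (s.length - t) = (Pb s true).drop t ++ [true] := by
            rw [List.rotate_eq_drop_append_take (show t ≤ s.length by omega),
              List.take_left' (by rw [List.length_drop]), f1 t (by omega)]
          have h3 : ((Tw s v).rotate (t + 1)).take (s.length - t) <
              (substWord s (maxRot r)).take (s.length - t) := by
            rw [h1, hMtake_mt _ (by omega)]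
            calc (Pb s true).drop t ++ [false]
                < (s.rotate t).take (s.length - t) := by
                  rw [h2]; exact lex_append_left _ (List.Lex.rel bool_flt)
              _ ≤ (maxRot s).take (s.length - t) :=
                  take_le_take (by rw [List.length_rotate, halen]) _ (F.hmax t)
              _ ≤ (Pb s false ++ [true]).take (s.length - t) :=
                  take_le_take (by rw [halen, hap_len]) _ ha_lt_ap.le
          exact (lex_take _ (by omega) (by omega) h3).le
      | false =>
        cases c₁ with
        | false =>
          have h1 : ((Tw s v).rotate (t + 1)).take s.length = (maxRot s).rotate t := by
            rw [hρ, show s.length = s.length - 1 - t + (t + 1) by omega,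
              htake false false _ t,
              List.take_append, show t - (Pb s false).length = 0 by omega,
              List.take_zero, List.append_nil,
              List.rotate_eq_drop_append_take (show t ≤ (maxRot s).length by omega),
              f2 t (by omega), f4 t (by omega)]
            simp [List.append_assoc]
          have h2 : ((Tw s v).rotate (t + 1)).take s.length <
              (substWord s (maxRot r)).take s.length := by
            rw [h1, hMtakem]
            exact lt_of_le_of_lt (f7 t) ha_lt_ap
          exact (lex_take s.length (by omega) (by omega) h2).le
        | true =>
          rcases Nat.eq_zero_or_pos t with rfl | htpos
          · -- boundary case: monotonicity of the coding
            have hρ0 : (Tw s v).rotate 1 = Pb s false ++ (Tw s (true :: v2) ++ [false]) := by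
              rw [hρ, List.drop_zero, List.take_zero, Tw_cons]
              simp [tau, List.append_assoc]
            have hM0 : substWord s (maxRot r) =
                Pb s false ++ (Tw s (true :: (z2h :: z2t).dropLast) ++ [false]) := by
              rw [hM, Tw_cons]
              simp [tau, List.append_assoc]
            have hy : v.rotate 1 = (true :: v2) ++ [false] := by
              rw [hvform, List.rotate_cons_succ, List.rotate_zero]
            have hz' : maxRot r = (true :: (z2h :: z2t).dropLast) ++ [false] := by
              conv_lhs => rw [G.astruct]
              rw [hzdl]
            have hylen : ((true :: v2) ++ [false]).length = r.length := by
              rw [← hy, List.length_rotate, hvlen]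
            have hzlen2 : ((true :: (z2h :: z2t).dropLast) ++ [false]).length = r.length := by
              rw [← hz', hzlen]
            have hle : (true :: v2) ++ [false] ≤ (true :: (z2h :: z2t).dropLast) ++ [false] := by
              rw [← hy, ← hz']
              exact hv1le
            have hYZlen : (true :: v2).length = (true :: (z2h :: z2t).dropLast).length := by
              simp at hylen hzlen2 ⊢
              omega
            rcases eq_or_lt_of_le hle with heq | hlt
            · have hYZ : true :: v2 = true :: (z2h :: z2t).dropLast :=
                List.append_cancel_right heq
              rw [hρ0, hM0, hYZ]
            · have hYZ : true :: v2 < true :: (z2h :: z2t).dropLast := by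
                rcases lex_split hYZlen hlt with h | ⟨_, hff⟩
                · exact h
                · exact absurd hff (lt_irrefl _)
              rw [hρ0, hM0]
              exact (lex_append_left _ (Tw_mono _ _ hYZlen hYZ)).le
          · -- interior case: uses the co-Lyndon property of `maxRot s`
            have hL4 := F.acoL t htpos (by omega)
            have hEne : (maxRot s).take (s.length - t) ≠ [] := by
              intro hnil
              have := congrArg List.length hnil
              rw [List.length_take, halen] at this
              simp at this
              omega
            have hEdl : ((maxRot s).take (s.length - t)).dropLast =
                (maxRot s).take (s.length - 1 - t) := by
              rw [List.dropLast_eq_take, List.length_take, List.take_take]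
              congr 1
              rw [halen]
              omega
            obtain ⟨e, he⟩ : ∃ e, (maxRot s).take (s.length - t) =
                (maxRot s).take (s.length - 1 - t) ++ [e] :=
              ⟨_, by rw [← hEdl]; exact (List.dropLast_append_getLast hEne).symm⟩
            rw [f2 t (by omega), he] at hL4
            rcases lex_split
              (by rw [List.length_drop, hA'len, List.length_take, halen]; omega) hL4 with
              hα | ⟨heq, hsing⟩
            · have h1 : ((Tw s v).rotate (t + 1)).take (s.length - 1 - t) =
                  (Pb s false).drop t := by
                rw [hρ, List.take_append,
                  List.take_of_length_le (by rw [List.length_drop, hA'len]),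
                  show s.length - 1 - t - ((Pb s false).drop t).length = 0 by
                    rw [List.length_drop, hA'len]; omega,
                  List.take_zero, List.append_nil]
              have h2 : (substWord s (maxRot r)).take (s.length - 1 - t) =
                  (maxRot s).take (s.length - 1 - t) := by
                rw [hMtake_mt _ (by omega), List.take_append,
                  show s.length - 1 - t - (Pb s false).length = 0 by omega,
                  List.take_zero, List.append_nil, ← f4 (s.length - 1 - t) (by omega)]
              refine (lex_take (s.length - 1 - t) (by omega) (by omega) ?_).le
              rw [h1, h2]
              exact hα
            · have he_true : e = true := (lex_singleton hsing).2
              have hρmt : ((Tw s v).rotate (t + 1)).take (s.length - t) =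
                  (Pb s false).drop t ++ [true] := by
                rw [hρ, show s.length - t = s.length - 1 - t + (0 + 1) by omega,
                  htake false true _ 0, List.take_zero]
              have hMmt : (substWord s (maxRot r)).take (s.length - t) =
                  (Pb s false).drop t ++ [true] := by
                rw [hMtake_mt _ (by omega), List.take_append,
                  show s.length - t - (Pb s false).length = 0 by omega,
                  List.take_zero, List.append_nil, ← f4 (s.length - t) (by omega), he, he_true, ← heq]
              have hρd : ((Tw s v).rotate (t + 1)).drop (s.length - t) =
                  Pb s true ++ (Tw s v2 ++ (false :: (Pb s false).take t)) := by
                rw [hρ, List.drop_append,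
                  List.drop_eq_nil_of_le (by rw [List.length_drop, hA'len]; omega),
                  List.nil_append,
                  show s.length - t - ((Pb s false).drop t).length = 0 + 1 by
                    rw [List.length_drop, hA'len]; omega,
                  List.drop_succ_cons, List.drop_zero]
              have hMd : (substWord s (maxRot r)).drop (s.length - t) =
                  (Pb s false).drop (s.length - t) ++
                    (true :: (Pb s true ++ (Tw s ((z2h :: z2t).dropLast) ++ [false]))) := by
                rw [hM, List.drop_append,
                  show s.length - t - (Pb s false).length = 0 by omega, List.drop_zero]
              have h7 : (((Tw s v).rotate (t + 1)).drop (s.length - t)).take t = s.take t := by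
                rw [hρd, List.take_append,
                  show t - (Pb s true).length = 0 by omega,
                  List.take_zero, List.append_nil, ← f3 t (by omega)]
              have h8 : ((substWord s (maxRot r)).drop (s.length - t)).take t =
                  (Pb s false).drop (s.length - t) ++ [true] := by
                rw [hMd, List.take_append,
                  List.take_of_length_le (by rw [List.length_drop, hA'len]; omega),
                  show t - ((Pb s false).drop (s.length - t)).length = 0 + 1 by
                    rw [List.length_drop, hA'len]; omega,
                  List.take_succ_cons, List.take_zero]
              have h9 : s.take t ≤ (maxRot s).drop (s.length - t) := by
                have h9a := take_le_take (x := s) (y := (maxRot s).rotate (s.length - t))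
                  (by rw [List.length_rotate, halen]) t (f8 (s.length - t))
                rwa [List.rotate_eq_drop_append_take (by omega),
                  List.take_append,
                  List.take_of_length_le (l := (maxRot s).drop (s.length - t))
                    (by rw [List.length_drop, halen]; omega),
                  show t - ((maxRot s).drop (s.length - t)).length = 0 by
                    rw [List.length_drop, halen]; omega,
                  List.take_zero, List.append_nil] at h9a
              have h10 : s.take t < (Pb s false).drop (s.length - t) ++ [true] := by
                refine lt_of_le_of_lt (h9.trans_eq (f2 _ (by omega))) ?_
                exact lex_append_left _ (List.Lex.rel bool_flt)
              have hdrop : ((Tw s v).rotate (t + 1)).drop (s.length - t) <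
                  (substWord s (maxRot r)).drop (s.length - t) := by
                refine lex_take t (by rw [List.length_drop]; omega)
                  (by rw [List.length_drop]; omega) ?_
                rw [h7, h8]
                exact h10
              have hsplit : (Tw s v).rotate (t + 1) =
                  ((substWord s (maxRot r)).take (s.length - t)) ++
                    ((Tw s v).rotate (t + 1)).drop (s.length - t) := by
                conv_lhs => rw [← List.take_append_drop (s.length - t) ((Tw s v).rotate (t + 1))]
                rw [hρmt, hMmt]
              rw [hsplit]
              conv_rhs => rw [← List.take_append_drop (s.length - t) (substWord s (maxRot r))]
              exact (lex_append_left _ hdrop).le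
  -- final assembly
  obtain ⟨rtl, hrtl⟩ := G.shead
  have hrne : r ≠ [] := by rw [hrtl]; simp
  have hrgl : (false :: rtl).getLast (by simp) = !false := by
    have h := getLast_cat (w := false :: rtl) (by simp) (hrtl ▸ G.sstruct)
    rw [h]
    rfl
  have hSrot : substWord s r = (Tw s r).rotate ((r.length - 1) * s.length + 1) := by
    conv_lhs => rw [hrtl]
    rw [subst_rotate' F false rtl hrgl, ← hrtl]
  have hTrlen : (Tw s r).length = r.length * s.length := length_Tw F r
  have hNpos : 0 < r.length * s.length := by positivity
  apply maxRot_eq_of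
  · obtain ⟨k, hk, hzk⟩ := exists_maxRot_rotate r hrne
    refine ⟨k * s.length, ?_⟩
    rw [hSrot, List.rotate_rotate, hMrot, hzk, ← Tw_rotate_mul F, List.rotate_rotate]
    congr 1
    ring
  · intro j
    rw [hSrot, List.rotate_rotate]
    generalize (r.length - 1) * s.length + 1 + j = J
    rw [← List.rotate_mod]
    have hJ : J % (Tw s r).length = s.length * (J % (Tw s r).length / s.length) +
        J % (Tw s r).length % s.length := (Nat.div_add_mod _ _).symm
    rw [hJ, Nat.mul_comm, ← List.rotate_rotate, Tw_rotate_mul F]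
    exact key _ ⟨_, rfl⟩ _ (Nat.mod_lt _ (by omega))

end Stmt8Aux


/-- For Lyndon words `s, r` of length at least 2, `L(s • r) = s • L(r)`. -/
theorem stmt8 (s r : List Bool) (hs : 2 ≤ s.length) (hr : 2 ≤ r.length)
    (hLs : IsLyndon s) (hLr : IsLyndon r) :
    maxRot (substWord s r) = substWord s (maxRot r) := by
  exact Stmt8Aux.main s r hs hr hLs hLr
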